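/- Let I be a polymatroidal ideal of degree d = 2 in R = k[x_1,...,x_n]. If every associated prime of R/I is a minimal prime of I, i.e., Ass(R/I) = Min(R/I), then I is a matroidal ideal or I = m^2, where m = (x_1,...,x_n) is the maximal graded ideal. -/

import Mathlib

open MvPolynomial

namespace PaperDefs

variable {k : Type*} [Field k] {n : ℕ}

/-- The total degree of an exponent vector. -/
def edeg (a : Fin n →₀ ℕ) : ℕ := ∑ i, a i

/-- `I` is a monomial ideal: it is generated by a set of monomials. -/
def IsMonomialIdeal (I : Ideal (MvPolynomial (Fin n) k)) : Prop :=
  ∃ S : Set (Fin n →₀ ℕ),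
    I = Ideal.span ((fun a => (MvPolynomial.monomial a (1 : k))) '' S)

/-- The (exponent vectors of the) unique minimal monomial generating set `G(I)`:
monomials of `I` that are minimal with respect to divisibility. -/
def minGens (I : Ideal (MvPolynomial (Fin n) k)) : Set (Fin n →₀ ℕ) :=
  {a | (MvPolynomial.monomial a (1 : k)) ∈ I ∧
    ∀ b : Fin n →₀ ℕ, b < a → (MvPolynomial.monomial b (1 : k)) ∉ I}

/-- A squarefree exponent vector. -/
def SqFree (a : Fin n →₀ ℕ) : Prop := ∀ i, a i ≤ 1

/-- `I` is a polymatroidal ideal of degree `d`. -/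
def IsPolymatroidal (I : Ideal (MvPolynomial (Fin n) k)) (d : ℕ) : Prop :=
  IsMonomialIdeal I ∧ I ≠ ⊥ ∧
  (∀ a ∈ minGens I, edeg a = d) ∧
  ∀ a ∈ minGens I, ∀ b ∈ minGens I, ∀ i : Fin n, b i < a i →
    ∃ j : Fin n, a j < b j ∧
      (MvPolynomial.monomial (a - Finsupp.single i 1 + Finsupp.single j 1) (1 : k)) ∈ I

/-- `I` is a matroidal ideal of degree `d`: a squarefree polymatroidal ideal. -/
def IsMatroidal (I : Ideal (MvPolynomial (Fin n) k)) (d : ℕ) : Prop :=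
  IsPolymatroidal I d ∧ ∀ a ∈ minGens I, SqFree a

/-- `I` is full-supported: every variable divides some minimal generator. -/
def FullSupported (I : Ideal (MvPolynomial (Fin n) k)) : Prop :=
  ∀ i : Fin n, ∃ a ∈ minGens I, a i ≠ 0

/-- The maximal graded ideal `(x_1, ..., x_n)`. -/
noncomputable def varIdeal (k : Type*) [Field k] (n : ℕ) : Ideal (MvPolynomial (Fin n) k) :=
  Ideal.span (Set.range MvPolynomial.X)

/-- The colon ideal `(I : x_i)`. -/
noncomputable def colonVar (I : Ideal (MvPolynomial (Fin n) k)) (i : Fin n) :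
    Ideal (MvPolynomial (Fin n) k) :=
  I.colon ((Ideal.span {MvPolynomial.X i} : Ideal (MvPolynomial (Fin n) k)) : Set (MvPolynomial (Fin n) k))

/-- The height of an ideal: the infimum of `Order.height` over the primes containing it. -/
noncomputable def ht {R : Type*} [CommRing R] (I : Ideal R) : ℕ∞ :=
  ⨅ (p : PrimeSpectrum R) (_ : I ≤ p.asIdeal), Order.height p

/-- `I` is unmixed: all associated primes of `R/I` have the same height. -/
def IsUnmixed (I : Ideal (MvPolynomial (Fin n) k)) : Prop :=
  ∀ p ∈ associatedPrimes (MvPolynomial (Fin n) k) (MvPolynomial (Fin n) k ⧸ I),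
    ∀ q ∈ associatedPrimes (MvPolynomial (Fin n) k) (MvPolynomial (Fin n) k ⧸ I),
      ht p = ht q

/-- The arithmetical rank of `I`. -/
noncomputable def ara (I : Ideal (MvPolynomial (Fin n) k)) : ℕ :=
  sInf {t : ℕ | ∃ f : Fin t → MvPolynomial (Fin n) k,
    (Ideal.span (Set.range f)).radical = I.radical}

/-- The squarefree Veronese ideal of degree `d`. -/
noncomputable def sqfreeVeronese (k : Type*) [Field k] (n d : ℕ) : Ideal (MvPolynomial (Fin n) k) :=
  Ideal.span ((fun s : Finset (Fin n) => ∏ i ∈ s, MvPolynomial.X i) ''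
    {s : Finset (Fin n) | s.card = d})

/-- The depth of `R/I` : the supremum of lengths of `R/I`-regular sequences consisting of
elements of the maximal graded ideal. -/
noncomputable def quotDepth (I : Ideal (MvPolynomial (Fin n) k)) : ℕ :=
  sSup {r : ℕ | ∃ rs : List (MvPolynomial (Fin n) k), rs.length = r ∧
    (∀ x ∈ rs, x ∈ varIdeal k n) ∧
    RingTheory.Sequence.IsRegular (MvPolynomial (Fin n) k ⧸ I) rs}

/-- `R/I` is Cohen–Macaulay: the depth of `R/I` equals its Krull dimension. -/
def IsCohenMacaulayQuot (I : Ideal (MvPolynomial (Fin n) k)) : Prop :=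
  (quotDepth I : WithBot ℕ∞) = ringKrullDim (MvPolynomial (Fin n) k ⧸ I)

end PaperDefs

namespace PaperDefs
open Finsupp

variable {k : Type*} [Field k] {n : ℕ}

open PaperDefs Finsupp

variable {k : Type*} [Field k] {n : ℕ}

lemma edeg_mono {a b : Fin n →₀ ℕ} (h : a ≤ b) : edeg a ≤ edeg b :=
  Finset.sum_le_sum fun i _ => h i

lemma eq_of_le_of_edeg_le {a b : Fin n →₀ ℕ} (h : a ≤ b) (hd : edeg b ≤ edeg a) : a = b := by
  ext i
  by_contra hne
  have h1 : a i < b i := lt_of_le_of_ne (h i) hne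
  have : edeg a < edeg b :=
    Finset.sum_lt_sum (fun i _ => h i) ⟨i, Finset.mem_univ i, h1⟩
  omega

lemma edeg_lt_of_lt {a b : Fin n →₀ ℕ} (h : a < b) : edeg a < edeg b := by
  by_contra hle
  exact h.ne (eq_of_le_of_edeg_le h.le (by omega))

lemma edeg_single (i : Fin n) (c : ℕ) : edeg (Finsupp.single i c) = c := by
  simp [edeg, Finsupp.single_apply]

lemma edeg_add (a b : Fin n →₀ ℕ) : edeg (a + b) = edeg a + edeg b := by
  simp [edeg, Finset.sum_add_distrib]

lemma exists_pos_of_edeg_pos {a : Fin n →₀ ℕ} (h : 0 < edeg a) : ∃ i, 1 ≤ a i := by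
  by_contra hc
  push_neg at hc
  have : edeg a = 0 := Finset.sum_eq_zero fun i _ => by have := hc i; omega
  omega

lemma exists_minGen_le (I : Ideal (MvPolynomial (Fin n) k)) (a : Fin n →₀ ℕ)
    (ha : (monomial a (1:k)) ∈ I) : ∃ c ∈ minGens I, c ≤ a := by
  induction a using WellFoundedLT.induction with
  | ind a ih =>
    by_cases h : ∃ b < a, (monomial b (1:k)) ∈ I
    · obtain ⟨b, hb, hbI⟩ := h
      obtain ⟨c, hc, hcb⟩ := ih b hb hbI
      exact ⟨c, hc, hcb.trans hb.le⟩
    · push_neg at h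
      exact ⟨a, ⟨ha, fun b hb => h b hb⟩, le_rfl⟩

lemma mem_varIdeal_iff (f : MvPolynomial (Fin n) k) :
    f ∈ varIdeal k n ↔ constantCoeff f = 0 := by
  rw [varIdeal, ← Set.image_univ, mem_ideal_span_X_image]
  constructor
  · intro h
    by_contra hc
    have h0 : (0 : Fin n →₀ ℕ) ∈ f.support := by
      rw [MvPolynomial.mem_support_iff]
      exact hc
    obtain ⟨i, _, hi⟩ := h 0 h0
    simp at hi
  · intro h m hm
    have hm0 : m ≠ 0 := by
      rintro rfl
      rw [MvPolynomial.mem_support_iff] at hm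
      exact hm h
    obtain ⟨i, hi⟩ : ∃ i, m i ≠ 0 := by
      by_contra hc
      push_neg at hc
      exact hm0 (Finsupp.ext hc)
    exact ⟨i, Set.mem_univ i, hi⟩

lemma varIdeal_isPrime : (varIdeal k n).IsPrime := by
  have : varIdeal k n = RingHom.ker (constantCoeff (σ := Fin n) (R := k)) := by
    ext f
    rw [mem_varIdeal_iff, RingHom.mem_ker]
  rw [this]
  exact RingHom.ker_isPrime _

lemma X_mul_X (i j : Fin n) :
    (X i : MvPolynomial (Fin n) k) * X j
      = monomial (Finsupp.single i 1 + Finsupp.single j 1) (1:k) := by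
  rw [X, X, monomial_mul, one_mul]

end PaperDefs

open PaperDefs in
/-- Proposition 1.7. Let `I` be a (full-supported, as assumed throughout
the paper) polymatroidal ideal of degree `2`. If `Ass(R/I) = Min(R/I)`, then `I` is a
matroidal ideal or `I = 𝔪²`, where `𝔪 = (x_1, ..., x_n)`. -/
theorem statement9 {k : Type*} [Field k] {n : ℕ}
    (I : Ideal (MvPolynomial (Fin n) k))
    (hI : IsPolymatroidal I 2) (hfull : FullSupported I)
    (hass : associatedPrimes (MvPolynomial (Fin n) k) (MvPolynomial (Fin n) k ⧸ I) =
      I.minimalPrimes) :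
    IsMatroidal I 2 ∨ I = (varIdeal k n) ^ 2 := by
  classical
  obtain ⟨hmono, hbot, hdeg, hexch⟩ := id hI
  obtain ⟨S, hS⟩ := id hmono
  -- basic facts
  have F1 : ∀ a : Fin n →₀ ℕ, monomial a (1:k) ∈ I → 2 ≤ edeg a := by
    intro a ha
    obtain ⟨c, hc, hca⟩ := exists_minGen_le I a ha
    calc 2 = edeg c := (hdeg c hc).symm
      _ ≤ edeg a := edeg_mono hca
  have F2 : ∀ a : Fin n →₀ ℕ, monomial a (1:k) ∈ I → edeg a = 2 → a ∈ minGens I := by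
    intro a ha hd
    exact ⟨ha, fun b hb hbI => by have := F1 b hbI; have := edeg_lt_of_lt hb; omega⟩
  have F4 : ∀ (a : Fin n →₀ ℕ) (j : Fin n), edeg a = 2 → 1 ≤ a j →
      ∃ l, a = Finsupp.single j 1 + Finsupp.single l 1 := by
    intro a j hd hj
    have hle : Finsupp.single j 1 ≤ a := Finsupp.single_le_iff.mpr hj
    have heq : Finsupp.single j 1 + (a - Finsupp.single j 1) = a := add_tsub_cancel_of_le hle
    have hdb : edeg (a - Finsupp.single j 1) = 1 := by
      have := edeg_add (Finsupp.single j 1) (a - Finsupp.single j 1)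
      rw [heq, edeg_single] at this
      omega
    obtain ⟨l, hl⟩ := exists_pos_of_edeg_pos (show 0 < edeg (a - Finsupp.single j 1) by omega)
    have hb : a - Finsupp.single j 1 = Finsupp.single l 1 := by
      refine (eq_of_le_of_edeg_le (Finsupp.single_le_iff.mpr hl) ?_).symm
      rw [edeg_single]; omega
    exact ⟨l, by rw [← heq, hb]⟩
  by_cases hsf : ∀ a ∈ minGens I, SqFree a
  · exact Or.inl ⟨hI, hsf⟩
  right
  push_neg at hsf
  obtain ⟨a, haG, hasf⟩ := hsf
  rw [SqFree] at hasf
  push_neg at hasf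
  obtain ⟨i₀, hi₀⟩ := hasf
  have ha2 : a = Finsupp.single i₀ 2 := by
    refine (eq_of_le_of_edeg_le (Finsupp.single_le_iff.mpr (by omega)) ?_).symm
    rw [edeg_single, hdeg a haG]
  -- Key 1 : x_{i₀} x_j ∈ I for every j
  have key1 : ∀ j, monomial (Finsupp.single i₀ 1 + Finsupp.single j 1) (1:k) ∈ I := by
    intro j
    by_cases hj : j = i₀
    · subst hj
      rw [← Finsupp.single_add]
      rw [show (1+1 : ℕ) = 2 from rfl, ← ha2]
      exact haG.1
    · obtain ⟨b, hbG, hbj⟩ := hfull j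
      have hdb : edeg b = 2 := hdeg b hbG
      by_cases hbi : b i₀ = 0
      · obtain ⟨l, hbl⟩ := F4 b j hdb (by omega)
        have hli₀ : l ≠ i₀ := by
          rintro rfl
          rw [hbl] at hbi
          simp [Finsupp.single_apply, hj] at hbi
        have hlt : a l < b l := by
          have h1 : a l = 0 := by
            rw [ha2, Finsupp.single_eq_of_ne' (Ne.symm hli₀)]
          have h2 : 1 ≤ b l := by
            rw [hbl]
            simp [Finsupp.single_apply]
          omega
        obtain ⟨j', hj', hmem⟩ := hexch b hbG a haG l hlt
        have hj'i₀ : j' = i₀ := by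
          by_contra hcc
          rw [ha2, Finsupp.single_eq_of_ne' (Ne.symm hcc)] at hj'
          omega
        subst hj'i₀
        have hsub : b - Finsupp.single l 1 = Finsupp.single j 1 := by
          rw [hbl, add_tsub_cancel_right]
        rw [hsub, add_comm] at hmem
        exact hmem
      · have hle : Finsupp.single i₀ 1 + Finsupp.single j 1 ≤ b := by
          rw [Finsupp.le_def]
          intro t
          rw [Finsupp.add_apply, Finsupp.single_apply, Finsupp.single_apply]
          split_ifs with h1 h2 h2
          · exact absurd (h2.trans h1.symm) hj
          · rw [← h1]; omega
          · rw [← h2]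
            have : b j ≠ 0 := hbj
            omega
          · omega
        have heq : Finsupp.single i₀ 1 + Finsupp.single j 1 = b := by
          refine eq_of_le_of_edeg_le hle ?_
          rw [hdb, edeg_add, edeg_single, edeg_single]
        rw [heq]
        exact hbG.1
  -- Key 2 : the annihilator of x_{i₀} in R/I is the maximal ideal
  have hcolon : varIdeal k n ≤ I.colon ((Ideal.span {X i₀} : Ideal (MvPolynomial (Fin n) k)) : Set (MvPolynomial (Fin n) k)) := by
    rw [varIdeal, Ideal.span_le]
    rintro _ ⟨j, rfl⟩
    rw [SetLike.mem_coe, Ideal.mem_colon_span_singleton, X_mul_X, add_comm]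
    exact key1 j
  have hXi₀ : (X i₀ : MvPolynomial (Fin n) k) ∉ I := by
    intro h
    rw [X] at h
    have := F1 _ h
    rw [edeg_single] at this
    omega
  have hann : varIdeal k n =
      (Submodule.span (MvPolynomial (Fin n) k) {Ideal.Quotient.mk I (X i₀)}).annihilator := by
    ext g
    rw [Submodule.mem_annihilator_span_singleton]
    have hsm : g • (Ideal.Quotient.mk I (X i₀)) = Ideal.Quotient.mk I (g * X i₀) := rfl
    rw [hsm, Ideal.Quotient.eq_zero_iff_mem]
    constructor
    · intro hg
      exact Ideal.mem_colon_span_singleton.mp (hcolon hg)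
    · intro hg
      rw [mem_varIdeal_iff]
      by_contra hc
      have hgm : g - C (constantCoeff g) ∈ varIdeal k n := by
        rw [mem_varIdeal_iff]
        simp
      have h1 : (g - C (constantCoeff g)) * X i₀ ∈ I :=
        Ideal.mem_colon_span_singleton.mp (hcolon hgm)
      have h2 : C (constantCoeff g) * X i₀ ∈ I := by
        have := I.sub_mem hg h1
        convert this using 1
        ring
      have h3 : (X i₀ : MvPolynomial (Fin n) k) ∈ I := by
        have := I.mul_mem_left (C (constantCoeff g)⁻¹) h2
        rwa [← mul_assoc, ← C_mul, inv_mul_cancel₀ hc, C_1, one_mul] at this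
      exact hXi₀ h3
  have hassmem : varIdeal k n ∈
      associatedPrimes (MvPolynomial (Fin n) k) (MvPolynomial (Fin n) k ⧸ I) :=
    by
      refine ⟨varIdeal_isPrime, Ideal.Quotient.mk I (X i₀), ?_⟩
      have hc : (⊥ : Submodule (MvPolynomial (Fin n) k) (MvPolynomial (Fin n) k ⧸ I)).colon
          {Ideal.Quotient.mk I (X i₀)} = varIdeal k n := by
        rw [hann]; ext r
        simp [Submodule.mem_annihilator_span_singleton, Submodule.mem_colon_singleton]
      rw [hc, varIdeal_isPrime.radical]
  have hmin : varIdeal k n ∈ I.minimalPrimes := by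
    rw [← hass]
    exact hassmem
  -- Key 5 : every x_j² lies in I
  have key5 : ∀ j, monomial (Finsupp.single j 2) (1:k) ∈ I := by
    intro j
    by_contra hj2
    set σf : Fin n → Polynomial k := fun t => if t = j then Polynomial.X else 0 with hσ
    set φ : MvPolynomial (Fin n) k →+* Polynomial k := (aeval σf).toRingHom with hφ
    have hIq : I ≤ RingHom.ker φ := by
      rw [hS, Ideal.span_le]
      rintro _ ⟨s, hsS, rfl⟩
      have hsI : monomial s (1:k) ∈ I := by
        rw [hS]; exact Ideal.subset_span ⟨s, hsS, rfl⟩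
      rw [SetLike.mem_coe, RingHom.mem_ker]
      obtain ⟨t, htj, hst⟩ : ∃ t, t ≠ j ∧ s t ≠ 0 := by
        by_contra hcon
        push_neg at hcon
        obtain ⟨c, hcG, hcs⟩ := exists_minGen_le I s hsI
        have hct : ∀ t, t ≠ j → c t = 0 := fun t ht =>
          Nat.le_zero.mp ((hcs t).trans_eq (hcon t ht))
        have hcj : edeg c = c j := by
          rw [edeg]
          exact Finset.sum_eq_single j (fun t _ ht => hct t ht)
            (fun h => absurd (Finset.mem_univ j) h)
        have h2 : c j = 2 := by rw [← hcj]; exact hdeg c hcG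
        have : c = Finsupp.single j 2 := by
          ext t
          rcases eq_or_ne t j with rfl | ht
          · simp [h2]
          · rw [hct t ht, Finsupp.single_eq_of_ne' (Ne.symm ht)]
        exact hj2 (this ▸ hcG.1)
      show (aeval σf) (monomial s (1:k)) = 0
      rw [aeval_monomial]
      have : (s.prod fun i e => σf i ^ e) = 0 := by
        refine Finset.prod_eq_zero (Finsupp.mem_support_iff.mpr hst) ?_
        rw [hσ]
        simp [htj, zero_pow hst]
      rw [this, mul_zero]
    have hker : (Polynomial.evalRingHom (0:k)).comp φ
        = (constantCoeff : MvPolynomial (Fin n) k →+* k) := by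
      apply MvPolynomial.ringHom_ext
      · intro c
        simp [hφ]
      · intro t
        simp only [hφ, hσ, RingHom.coe_comp, Function.comp_apply, AlgHom.toRingHom_eq_coe,
          AlgHom.coe_toRingHom, aeval_X, constantCoeff_X]
        split_ifs <;> simp
    have hqm : RingHom.ker φ ≤ varIdeal k n := by
      intro g hg
      rw [mem_varIdeal_iff, ← hker]
      simp [RingHom.mem_ker.mp hg]
    have hXj : X j ∉ RingHom.ker φ := by
      rw [RingHom.mem_ker]
      simp only [hφ, hσ, AlgHom.toRingHom_eq_coe, AlgHom.coe_toRingHom, aeval_X, if_pos rfl]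
      exact Polynomial.X_ne_zero
    have hle := hmin.2 ⟨RingHom.ker_isPrime φ, hIq⟩ hqm
    exact hXj (hle (Ideal.subset_span ⟨j, rfl⟩))
  -- Key 6 : all degree-2 monomials lie in I
  have key6 : ∀ j l : Fin n, monomial (Finsupp.single j 1 + Finsupp.single l 1) (1:k) ∈ I := by
    intro j l
    rcases eq_or_ne j l with rfl | hjl
    · rw [← Finsupp.single_add]
      exact key5 j
    · have hjG : Finsupp.single j 2 ∈ minGens I := F2 _ (key5 j) (edeg_single j 2)
      have hlG : Finsupp.single l 2 ∈ minGens I := F2 _ (key5 l) (edeg_single l 2)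
      have hlt : (Finsupp.single l 2) j < (Finsupp.single j 2) j := by
        rw [Finsupp.single_eq_same, Finsupp.single_eq_of_ne' (Ne.symm hjl)]
        omega
      obtain ⟨j', hj', hmem⟩ := hexch _ hjG _ hlG j hlt
      have hj'l : j' = l := by
        by_contra hcc
        rw [Finsupp.single_eq_of_ne' (Ne.symm hcc)] at hj'
        omega
      subst hj'l
      have hsub : Finsupp.single j 2 - Finsupp.single j 1 = Finsupp.single j 1 := by
        rw [← Finsupp.single_tsub]
      rwa [hsub] at hmem
  -- conclusion
  apply le_antisymm
  · rw [hS, Ideal.span_le]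
    rintro _ ⟨s, hsS, rfl⟩
    have hsI : monomial s (1:k) ∈ I := by
      rw [hS]; exact Ideal.subset_span ⟨s, hsS, rfl⟩
    have hs2 : 2 ≤ edeg s := F1 s hsI
    obtain ⟨i, hi⟩ := exists_pos_of_edeg_pos (show 0 < edeg s by omega)
    have hle1 : Finsupp.single i 1 ≤ s := Finsupp.single_le_iff.mpr hi
    have hd1 : 1 ≤ edeg (s - Finsupp.single i 1) := by
      have := edeg_add (Finsupp.single i 1) (s - Finsupp.single i 1)
      rw [add_tsub_cancel_of_le hle1, edeg_single] at this
      omega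
    obtain ⟨t, ht⟩ := exists_pos_of_edeg_pos (show 0 < edeg (s - Finsupp.single i 1) by omega)
    have hle2 : Finsupp.single t 1 ≤ s - Finsupp.single i 1 := Finsupp.single_le_iff.mpr ht
    have hXX : (X i * X t : MvPolynomial (Fin n) k) ∈ varIdeal k n ^ 2 := by
      rw [sq]
      exact Ideal.mul_mem_mul (Ideal.subset_span ⟨i, rfl⟩) (Ideal.subset_span ⟨t, rfl⟩)
    have hexp : Finsupp.single i 1 + Finsupp.single t 1
        + (s - Finsupp.single i 1 - Finsupp.single t 1) = s := by
      have h1 : Finsupp.single t 1 + (s - Finsupp.single i 1 - Finsupp.single t 1)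
          = s - Finsupp.single i 1 := by
        rw [add_comm]; exact tsub_add_cancel_of_le hle2
      rw [add_assoc, h1, add_comm]
      exact tsub_add_cancel_of_le hle1
    have heq : monomial s (1:k)
        = (X i * X t) * monomial (s - Finsupp.single i 1 - Finsupp.single t 1) (1:k) := by
      rw [X_mul_X, monomial_mul, one_mul, hexp]
    rw [SetLike.mem_coe]
    show monomial s (1:k) ∈ varIdeal k n ^ 2
    rw [heq]
    exact Ideal.mul_mem_right _ _ hXX
  · rw [sq, varIdeal, Ideal.span_mul_span', Ideal.span_le]
    rintro _ ⟨_, ⟨j, rfl⟩, _, ⟨l, rfl⟩, rfl⟩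
    rw [SetLike.mem_coe]
    show (X j : MvPolynomial (Fin n) k) * X l ∈ I
    rw [X_mul_X]
    exact key6 j l
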